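/- Let real numbers satisfy 0 < x^0_0 < y^0_0 < x^1_0 < y^1_0 < 1 and 0 < x^1_1 < y^1_1 < x^0_1 < y^0_1 < 1, and let X = [0,1]^2 \ (R^0 ∪ R^1) where R^0 = (x^0_0, y^0_0) × (x^0_1, y^0_1) and R^1 = (x^1_0, y^1_0) × (x^1_1, y^1_1) (one hole in the upper-left region, one in the lower-right region). Then the set of dihomotopy classes of total directed paths in X has exactly 3 elements. -/

import Mathlib

open Set

/-- A directed path in `Y ⊆ ℝⁿ`: a continuous map from the unit interval, all of whose
coordinate functions are monotone nondecreasing, with values in `Y`. -/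
def IsDiPath (n : ℕ) (Y : Set (Fin n → ℝ)) (p : unitInterval → Fin n → ℝ) : Prop :=
  Continuous p ∧ (∀ t, p t ∈ Y) ∧ ∀ j : Fin n, Monotone fun t => p t j

/-- A total directed path goes from `(0,…,0)` to `(1,…,1)`. -/
def IsTotalDiPath (n : ℕ) (Y : Set (Fin n → ℝ)) (p : unitInterval → Fin n → ℝ) : Prop :=
  IsDiPath n Y p ∧ p 0 = (fun _ => (0:ℝ)) ∧ p 1 = (fun _ => (1:ℝ))

/-- The unit cube `[0,1]^n`. -/
def cube (n : ℕ) : Set (Fin n → ℝ) := {z | ∀ j, z j ∈ Icc (0:ℝ) 1}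

/-- Elementary dihomotopy of directed paths with fixed common endpoints in `Y`. -/
def ElemDihomotopic (n : ℕ) (Y : Set (Fin n → ℝ)) (p q : unitInterval → Fin n → ℝ) : Prop :=
  IsDiPath n Y p ∧ IsDiPath n Y q ∧ p 0 = q 0 ∧ p 1 = q 1 ∧
  ∃ H : unitInterval → unitInterval → Fin n → ℝ,
    Continuous (fun tu : unitInterval × unitInterval => H tu.1 tu.2) ∧
    H 0 = p ∧ H 1 = q ∧ (∀ t, IsDiPath n Y (H t)) ∧
    ∀ (u : unitInterval) (j : Fin n), Monotone fun t => H t u j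

/-- Dihomotopy: equivalence relation generated by elementary dihomotopy. -/
def Dihomotopic (n : ℕ) (Y : Set (Fin n → ℝ)) :
    (unitInterval → Fin n → ℝ) → (unitInterval → Fin n → ℝ) → Prop :=
  Relation.EqvGen (ElemDihomotopic n Y)


lemma subIVT (f : unitInterval → ℝ) (hf : Continuous f) (a b : unitInterval) (hab : a ≤ b) (c : ℝ)
    (h : c ∈ Set.Icc (f a) (f b)) : ∃ t, a ≤ t ∧ t ≤ b ∧ f t = c := by
  set F : ℝ → ℝ := f ∘ (projIcc (0:ℝ) 1 zero_le_one) with hF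
  have hFc : Continuous F := hf.comp continuous_projIcc
  have hab' : (a:ℝ) ≤ b := hab
  have ha : F a = f a := by simp [hF, projIcc_val]
  have hb : F b = f b := by simp [hF, projIcc_val]
  obtain ⟨v, hv, hfv⟩ := intermediate_value_Icc hab' hFc.continuousOn (by rw [ha, hb]; exact h)
  refine ⟨projIcc 0 1 zero_le_one v, ?_, ?_, hfv⟩
  · have := monotone_projIcc (a := (0:ℝ)) (b := 1) (h := zero_le_one) hv.1
    simpa [projIcc_val] using this
  · have := monotone_projIcc (a := (0:ℝ)) (b := 1) (h := zero_le_one) hv.2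
    simpa [projIcc_val] using this

lemma totalIVT (p : unitInterval → Fin 2 → ℝ) (hc : Continuous p)
    (h0 : p 0 = fun _ => 0) (h1 : p 1 = fun _ => 1) {m : ℝ} (hm0 : 0 ≤ m) (hm1 : m ≤ 1) :
    ∃ t, p t 0 = m := by
  have hcf : Continuous fun t => p t 0 := (continuous_apply (0 : Fin 2)).comp hc
  have key := intermediate_value_univ (0:unitInterval) 1 hcf
  have : m ∈ Set.range fun t => p t 0 := key (by simp only [h0, h1]; exact ⟨hm0, hm1⟩)
  exact this

section Holes
variable {a b c d : ℝ}

lemma below_lem (p : unitInterval → Fin 2 → ℝ) (hc : Continuous p)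
    (hm : ∀ j, Monotone fun t => p t j)
    (hab : a < b) (hcd : c < d)
    (hav : ∀ t, ¬(a < p t 0 ∧ p t 0 < b ∧ c < p t 1 ∧ p t 1 < d))
    (t : unitInterval) (hft : p t 0 = (a+b)/2) (hgt : p t 1 ≤ c) :
    ∀ u, p u 0 < b → p u 1 ≤ c := by
  intro u hu
  by_contra hcu
  push_neg at hcu
  rcases le_total u t with h | h
  · have : p u 1 ≤ p t 1 := hm 1 h
    linarith
  · have hfu : a < p u 0 := by
      have : p t 0 ≤ p u 0 := hm 0 h
      rw [hft] at this; linarith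
    have hgu : d ≤ p u 1 := by
      by_contra hd; push_neg at hd
      exact hav u ⟨hfu, hu, hcu, hd⟩
    obtain ⟨v, hv1, hv2, hv3⟩ := subIVT (fun s => p s 1) ((continuous_apply (1 : Fin 2)).comp hc)
      t u h ((c+d)/2) ⟨by (try simp only); linarith, by (try simp only); linarith⟩
    refine hav v ⟨?_, ?_, by linarith, by linarith⟩
    · have : p t 0 ≤ p v 0 := hm 0 hv1
      rw [hft] at this; linarith
    · exact lt_of_le_of_lt (hm 0 hv2) hu

lemma above_lem (p : unitInterval → Fin 2 → ℝ) (hc : Continuous p)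
    (hm : ∀ j, Monotone fun t => p t j)
    (hab : a < b) (hcd : c < d)
    (hav : ∀ t, ¬(a < p t 0 ∧ p t 0 < b ∧ c < p t 1 ∧ p t 1 < d))
    (t : unitInterval) (hft : p t 0 = (a+b)/2) (hgt : d ≤ p t 1) :
    ∀ u, a < p u 0 → d ≤ p u 1 := by
  intro u hu
  by_contra hcu
  push_neg at hcu
  rcases le_total t u with h | h
  · have : p t 1 ≤ p u 1 := hm 1 h
    linarith
  · have hfu : p u 0 < b := by
      have : p u 0 ≤ p t 0 := hm 0 h
      rw [hft] at this; linarith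
    have hgu : p u 1 ≤ c := by
      by_contra hd; push_neg at hd
      exact hav u ⟨hu, hfu, hd, hcu⟩
    obtain ⟨v, hv1, hv2, hv3⟩ := subIVT (fun s => p s 1) ((continuous_apply (1 : Fin 2)).comp hc)
      u t h ((c+d)/2) ⟨by (try simp only); linarith, by (try simp only); linarith⟩
    refine hav v ⟨?_, ?_, by linarith, by linarith⟩
    · exact lt_of_lt_of_le hu (hm 0 hv1)
    · have : p v 0 ≤ p t 0 := hm 0 hv2
      rw [hft] at this; linarith

lemma excl_lem (p : unitInterval → Fin 2 → ℝ) (hc : Continuous p)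
    (hm : ∀ j, Monotone fun t => p t j)
    (hab : a < b) (hcd : c < d)
    (hav : ∀ t, ¬(a < p t 0 ∧ p t 0 < b ∧ c < p t 1 ∧ p t 1 < d))
    (t s : unitInterval) (hft : p t 0 = (a+b)/2) (hgt : p t 1 ≤ c)
    (hfs : p s 0 = (a+b)/2) (hgs : d ≤ p s 1) : False := by
  have hts : t ≤ s := by
    rcases le_total t s with h | h
    · exact h
    · have : p s 1 ≤ p t 1 := hm 1 h
      have : (c:ℝ) < c := by linarith
      linarith
  obtain ⟨v, hv1, hv2, hv3⟩ := subIVT (fun s => p s 1) ((continuous_apply (1 : Fin 2)).comp hc)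
    t s hts ((c+d)/2) ⟨by (try simp only); linarith, by (try simp only); linarith⟩
  have e1 : p t 0 ≤ p v 0 := hm 0 hv1
  have e2 : p v 0 ≤ p s 0 := hm 0 hv2
  rw [hft] at e1; rw [hfs] at e2
  exact hav v ⟨by linarith, by linarith, by linarith, by linarith⟩

end Holes

section Invariance

lemma elem_inv {Y : Set (Fin 2 → ℝ)} {a b c d : ℝ}
    (hab : a < b) (hcd : c < d)
    (hY : ∀ z ∈ Y, ¬(a < z 0 ∧ z 0 < b ∧ c < z 1 ∧ z 1 < d))
    (hm0 : 0 ≤ (a+b)/2) (hm1 : (a+b)/2 ≤ 1)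
    {p q : unitInterval → Fin 2 → ℝ}
    (h : ElemDihomotopic 2 Y p q)
    (hp0 : p 0 = fun _ => 0) (hp1 : p 1 = fun _ => 1) :
    (∃ t, p t 0 = (a+b)/2 ∧ p t 1 ≤ c) ↔ (∃ t, q t 0 = (a+b)/2 ∧ q t 1 ≤ c) := by
  obtain ⟨hp, hq, h00, h11, H, hHc, hH0, hH1, hHd, hHm⟩ := h
  have hend0 : ∀ t, H t 0 = fun _ => 0 := by
    intro t; funext j
    have mA : H 0 0 j = 0 := by rw [hH0, hp0]
    have mB : H 1 0 j = 0 := by rw [hH1, ← h00, hp0]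
    have l1 : H t 0 j ≤ 0 := mB ▸ hHm 0 j (unitInterval.le_one' : t ≤ 1)
    have l2 : 0 ≤ H t 0 j := mA ▸ hHm 0 j (unitInterval.nonneg' : 0 ≤ t)
    exact le_antisymm l1 l2
  have hend1 : ∀ t, H t 1 = fun _ => 1 := by
    intro t; funext j
    have mA : H 0 1 j = 1 := by rw [hH0, hp1]
    have mB : H 1 1 j = 1 := by rw [hH1, ← h11, hp1]
    have l1 : H t 1 j ≤ 1 := mB ▸ hHm 1 j (unitInterval.le_one' : t ≤ 1)
    have l2 : 1 ≤ H t 1 j := mA ▸ hHm 1 j (unitInterval.nonneg' : 0 ≤ t)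
    exact le_antisymm l1 l2
  have hav : ∀ t u, ¬(a < H t u 0 ∧ H t u 0 < b ∧ c < H t u 1 ∧ H t u 1 < d) :=
    fun t u => hY _ ((hHd t).2.1 u)
  have hdich : ∀ t, ∃ u, H t u 0 = (a+b)/2 ∧ (H t u 1 ≤ c ∨ d ≤ H t u 1) := by
    intro t
    obtain ⟨u, hu⟩ := totalIVT (H t) (hHd t).1 (hend0 t) (hend1 t) hm0 hm1
    refine ⟨u, hu, ?_⟩
    by_contra hcon
    push_neg at hcon
    exact hav t u ⟨by rw [hu]; linarith, by rw [hu]; linarith, hcon.1, hcon.2⟩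
  set T := {t : unitInterval | ∃ u, H t u 0 = (a+b)/2 ∧ H t u 1 ≤ c} with hT
  set S := {t : unitInterval | ∃ u, H t u 0 = (a+b)/2 ∧ d ≤ H t u 1} with hS
  have hφ : Continuous fun tu : unitInterval × unitInterval => H tu.1 tu.2 := hHc
  have hTclosed : IsClosed T := by
    have hC : IsClosed {tu : unitInterval × unitInterval |
        H tu.1 tu.2 0 = (a+b)/2 ∧ H tu.1 tu.2 1 ≤ c} := by
      refine IsClosed.inter ?_ ?_
      · exact isClosed_eq ((continuous_apply (0 : Fin 2)).comp hφ) continuous_const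
      · exact isClosed_le ((continuous_apply (1 : Fin 2)).comp hφ) continuous_const
    have him : T = Prod.fst '' {tu : unitInterval × unitInterval |
        H tu.1 tu.2 0 = (a+b)/2 ∧ H tu.1 tu.2 1 ≤ c} := by
      ext t
      constructor
      · rintro ⟨u, hu⟩; exact ⟨(t, u), hu, rfl⟩
      · rintro ⟨⟨t', u⟩, hu, rfl⟩; exact ⟨u, hu⟩
    rw [him]
    exact (hC.isCompact.image continuous_fst).isClosed
  have hSclosed : IsClosed S := by
    have hC : IsClosed {tu : unitInterval × unitInterval |
        H tu.1 tu.2 0 = (a+b)/2 ∧ d ≤ H tu.1 tu.2 1} := by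
      refine IsClosed.inter ?_ ?_
      · exact isClosed_eq ((continuous_apply (0 : Fin 2)).comp hφ) continuous_const
      · exact isClosed_le continuous_const ((continuous_apply (1 : Fin 2)).comp hφ)
    have him : S = Prod.fst '' {tu : unitInterval × unitInterval |
        H tu.1 tu.2 0 = (a+b)/2 ∧ d ≤ H tu.1 tu.2 1} := by
      ext t
      constructor
      · rintro ⟨u, hu⟩; exact ⟨(t, u), hu, rfl⟩
      · rintro ⟨⟨t', u⟩, hu, rfl⟩; exact ⟨u, hu⟩
    rw [him]
    exact (hC.isCompact.image continuous_fst).isClosed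
  have hcompl : Tᶜ = S := by
    ext t
    constructor
    · intro ht
      obtain ⟨u, hu1, hu2⟩ := hdich t
      rcases hu2 with h' | h'
      · exact absurd ⟨u, hu1, h'⟩ ht
      · exact ⟨u, hu1, h'⟩
    · rintro ⟨u, hu1, hu2⟩ ⟨v, hv1, hv2⟩
      exact excl_lem (H t) (hHd t).1 (hHd t).2.2 hab hcd (hav t) v u hv1 hv2 hu1 hu2
  have hclopen : IsClopen T := ⟨hTclosed, by rw [← isClosed_compl_iff, hcompl]; exact hSclosed⟩
  have h01 : (0 : unitInterval) ∈ T ↔ (1 : unitInterval) ∈ T := by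
    rcases isClopen_iff.mp hclopen with h' | h' <;> simp [h']
  constructor
  · intro hpt
    have : (0:unitInterval) ∈ T := by rw [hT]; simpa [hH0] using hpt
    have := h01.mp this
    rw [hT] at this; simpa [hH1] using this
  · intro hqt
    have : (1:unitInterval) ∈ T := by rw [hT]; simpa [hH1] using hqt
    have := h01.mpr this
    rw [hT] at this; simpa [hH0] using this

end Invariance

lemma dihom_inv_aux {Y : Set (Fin 2 → ℝ)} {a b c d : ℝ}
    (hab : a < b) (hcd : c < d)
    (hY : ∀ z ∈ Y, ¬(a < z 0 ∧ z 0 < b ∧ c < z 1 ∧ z 1 < d))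
    (hm0 : 0 ≤ (a+b)/2) (hm1 : (a+b)/2 ≤ 1)
    {p q : unitInterval → Fin 2 → ℝ}
    (h : Dihomotopic 2 Y p q) :
    (p 0 = q 0 ∧ p 1 = q 1) ∧ ((p 0 = fun _ => (0:ℝ)) → (p 1 = fun _ => (1:ℝ)) →
      ((∃ t, p t 0 = (a+b)/2 ∧ p t 1 ≤ c) ↔ (∃ t, q t 0 = (a+b)/2 ∧ q t 1 ≤ c))) := by
  induction h with
  | rel x y hxy => exact ⟨⟨hxy.2.2.1, hxy.2.2.2.1⟩,
      fun h0 h1 => elem_inv hab hcd hY hm0 hm1 hxy h0 h1⟩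
  | refl x => exact ⟨⟨rfl, rfl⟩, fun _ _ => Iff.rfl⟩
  | symm x y hxy ih =>
      refine ⟨⟨ih.1.1.symm, ih.1.2.symm⟩, fun h0 h1 => ?_⟩
      exact (ih.2 (ih.1.1 ▸ h0) (ih.1.2 ▸ h1)).symm
  | trans x y z hxy hyz ih1 ih2 =>
      refine ⟨⟨ih1.1.1.trans ih2.1.1, ih1.1.2.trans ih2.1.2⟩, fun h0 h1 => ?_⟩
      exact (ih1.2 h0 h1).trans (ih2.2 (ih1.1.1 ▸ h0) (ih1.1.2 ▸ h1))

/-- the reparametrization used in the lattice homotopy -/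
def stairParam (t u : unitInterval) : unitInterval :=
  ⟨max 0 (t.1 + u.1 - 1), le_max_left _ _,
    max_le zero_le_one (by have := t.2.2; have := u.2.2; linarith)⟩

lemma stairParam_cont : Continuous fun tu : unitInterval × unitInterval =>
    stairParam tu.1 tu.2 := by
  apply Continuous.subtype_mk
  exact continuous_const.max (((continuous_subtype_val.comp continuous_fst).add
    (continuous_subtype_val.comp continuous_snd)).sub continuous_const)

lemma stairParam_mono_u (t : unitInterval) : Monotone (stairParam t) := by
  intro u v huv
  simp only [stairParam, ← Subtype.coe_le_coe]
  exact max_le_max le_rfl (by have : (u:ℝ) ≤ v := huv; linarith)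

lemma stairParam_mono_t (u : unitInterval) : Monotone fun t => stairParam t u := by
  intro s t hst
  simp only [stairParam, ← Subtype.coe_le_coe]
  exact max_le_max le_rfl (by have : (s:ℝ) ≤ t := hst; linarith)

lemma stairParam_zero (u : unitInterval) : stairParam 0 u = 0 := by
  apply Subtype.ext
  have hc : ((0:unitInterval):ℝ) = 0 := rfl
  have := u.2.2
  simp only [stairParam]
  rw [hc, max_eq_left (by linarith)]

lemma stairParam_one (u : unitInterval) : stairParam 1 u = u := by
  apply Subtype.ext
  have hc : ((1:unitInterval):ℝ) = 1 := rfl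
  have := u.2.1
  simp only [stairParam]
  rw [hc, show (1:ℝ) + u.1 - 1 = u.1 by ring, max_eq_right (by linarith)]

lemma elem_to_max {X Y : Set (Fin 2 → ℝ)} (hYX : Y ⊆ X)
    (hmax : ∀ z ∈ Y, ∀ w ∈ Y, (fun j => max (z j) (w j)) ∈ Y)
    (hbd : ∀ z ∈ Y, ∀ j : Fin 2, 0 ≤ z j ∧ z j ≤ 1)
    {p q : unitInterval → Fin 2 → ℝ}
    (hp : IsTotalDiPath 2 Y p) (hq : IsTotalDiPath 2 Y q) :
    ElemDihomotopic 2 X p (fun u j => max (p u j) (q u j)) := by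
  have hpd : IsDiPath 2 X p := ⟨hp.1.1, fun t => hYX (hp.1.2.1 t), hp.1.2.2⟩
  have hMY : IsDiPath 2 Y fun u j => max (p u j) (q u j) := by
    refine ⟨?_, ?_, ?_⟩
    · exact continuous_pi fun j => ((continuous_apply j).comp hp.1.1).max
        ((continuous_apply j).comp hq.1.1)
    · exact fun t => hmax _ (hp.1.2.1 t) _ (hq.1.2.1 t)
    · exact fun j => (hp.1.2.2 j).max (hq.1.2.2 j)
  have hMd : IsDiPath 2 X fun u j => max (p u j) (q u j) :=
    ⟨hMY.1, fun t => hYX (hMY.2.1 t), hMY.2.2⟩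
  refine ⟨hpd, hMd, ?_, ?_, ?_⟩
  · funext j; simp [hp.2.1, hq.2.1]
  · funext j; simp [hp.2.2, hq.2.2]
  · refine ⟨fun t u j => max (p u j) (q (stairParam t u) j), ?_, ?_, ?_, ?_, ?_⟩
    · refine continuous_pi fun j => Continuous.max ?_ ?_
      · exact ((continuous_apply j).comp hp.1.1).comp continuous_snd
      · exact ((continuous_apply j).comp hq.1.1).comp stairParam_cont
    · funext u j
      show p u j ⊔ q (stairParam 0 u) j = p u j
      rw [stairParam_zero]
      have : q 0 j = 0 := by rw [hq.2.1]
      rw [this]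
      exact max_eq_left (hbd _ (hp.1.2.1 u) j).1
    · funext u j
      show p u j ⊔ q (stairParam 1 u) j = p u j ⊔ q u j
      rw [stairParam_one]
    · intro t
      refine ⟨?_, ?_, ?_⟩
      · refine continuous_pi fun j => Continuous.max ((continuous_apply j).comp hp.1.1) ?_
        exact ((continuous_apply j).comp hq.1.1).comp
          (stairParam_cont.comp (Continuous.prodMk_right t))
      · exact fun u => hYX (hmax _ (hp.1.2.1 u) _ (hq.1.2.1 (stairParam t u)))
      · exact fun j => (hp.1.2.2 j).max ((hq.1.2.2 j).comp (stairParam_mono_u t))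
    · exact fun u j => monotone_const.max ((hq.1.2.2 j).comp (stairParam_mono_t u))

lemma lattice_dihom {X Y : Set (Fin 2 → ℝ)} (hYX : Y ⊆ X)
    (hmax : ∀ z ∈ Y, ∀ w ∈ Y, (fun j => max (z j) (w j)) ∈ Y)
    (hbd : ∀ z ∈ Y, ∀ j : Fin 2, 0 ≤ z j ∧ z j ≤ 1)
    {p q : unitInterval → Fin 2 → ℝ}
    (hp : IsTotalDiPath 2 Y p) (hq : IsTotalDiPath 2 Y q) :
    Dihomotopic 2 X p q := by
  have h1 := elem_to_max hYX hmax hbd hp hq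
  have h2 := elem_to_max hYX hmax hbd hq hp
  have heq : (fun u j => max (q u j) (p u j)) = (fun u j => max (p u j) (q u j)) := by
    funext u j; exact max_comm _ _
  rw [heq] at h2
  exact Relation.EqvGen.trans _ _ _ (Relation.EqvGen.rel _ _ h1)
    (Relation.EqvGen.symm _ _ (Relation.EqvGen.rel _ _ h2))

section Reps

/-- bottom-right corner path -/
def cornerLR : unitInterval → Fin 2 → ℝ := fun u j =>
  if j = 0 then min (2*u.1) 1 else max (2*u.1-1) 0

/-- top-left corner path -/
def cornerUL : unitInterval → Fin 2 → ℝ := fun u j =>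
  if j = 0 then max (2*u.1-1) 0 else min (2*u.1) 1

/-- middle staircase path -/
def midPath (ca cb : ℝ) : unitInterval → Fin 2 → ℝ := fun u j =>
  if j = 0 then min (3*u.1*ca) ca + (max (3*u.1-2) 0)*(1-ca)
  else (min (max (3*u.1-1) 0) 1)*cb + (max (3*u.1-2) 0)*(1-cb)

lemma cornerLR_ev0 (u : unitInterval) : cornerLR u 0 = min (2*u.1) 1 := rfl
lemma cornerLR_ev1 (u : unitInterval) : cornerLR u 1 = max (2*u.1-1) 0 := rfl
lemma cornerUL_ev0 (u : unitInterval) : cornerUL u 0 = max (2*u.1-1) 0 := rfl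
lemma cornerUL_ev1 (u : unitInterval) : cornerUL u 1 = min (2*u.1) 1 := rfl
lemma midPath_ev0 (ca cb : ℝ) (u : unitInterval) :
    midPath ca cb u 0 = min (3*u.1*ca) ca + (max (3*u.1-2) 0)*(1-ca) := rfl
lemma midPath_ev1 (ca cb : ℝ) (u : unitInterval) :
    midPath ca cb u 1 = (min (max (3*u.1-1) 0) 1)*cb + (max (3*u.1-2) 0)*(1-cb) := rfl

lemma fin2_cases (j : Fin 2) : j = 0 ∨ j = 1 := by omega

lemma mono_2u : Monotone fun u : unitInterval => 2*u.1 := by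
  intro x y h
  show 2*(x:ℝ) ≤ 2*(y:ℝ)
  have : (x:ℝ) ≤ y := h
  linarith

lemma mono_2u1 : Monotone fun u : unitInterval => 2*u.1 - 1 := by
  intro x y h
  show 2*(x:ℝ) - 1 ≤ 2*(y:ℝ) - 1
  have : (x:ℝ) ≤ y := h
  linarith

lemma cornerLR_total (Y : Set (Fin 2 → ℝ)) (hmem : ∀ u, cornerLR u ∈ Y) :
    IsTotalDiPath 2 Y cornerLR := by
  refine ⟨⟨?_, hmem, ?_⟩, ?_, ?_⟩
  · refine continuous_pi fun j => ?_
    rcases fin2_cases j with h | h <;> subst h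
    · simp only [cornerLR_ev0]
      exact (continuous_const.mul continuous_subtype_val).min continuous_const
    · simp only [cornerLR_ev1]
      exact ((continuous_const.mul continuous_subtype_val).sub continuous_const).max
        continuous_const
  · intro j
    rcases fin2_cases j with h | h <;> subst h
    · simp only [cornerLR_ev0]
      exact mono_2u.min monotone_const
    · simp only [cornerLR_ev1]
      exact mono_2u1.max monotone_const
  · funext j
    rcases fin2_cases j with h | h <;> subst h <;>
      (simp [cornerLR_ev0, cornerLR_ev1]; try norm_num)
  · funext j
    rcases fin2_cases j with h | h <;> subst h <;>
      (simp [cornerLR_ev0, cornerLR_ev1]; try norm_num)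

lemma cornerUL_total (Y : Set (Fin 2 → ℝ)) (hmem : ∀ u, cornerUL u ∈ Y) :
    IsTotalDiPath 2 Y cornerUL := by
  refine ⟨⟨?_, hmem, ?_⟩, ?_, ?_⟩
  · refine continuous_pi fun j => ?_
    rcases fin2_cases j with h | h <;> subst h
    · simp only [cornerUL_ev0]
      exact ((continuous_const.mul continuous_subtype_val).sub continuous_const).max
        continuous_const
    · simp only [cornerUL_ev1]
      exact (continuous_const.mul continuous_subtype_val).min continuous_const
  · intro j
    rcases fin2_cases j with h | h <;> subst h
    · simp only [cornerUL_ev0]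
      exact mono_2u1.max monotone_const
    · simp only [cornerUL_ev1]
      exact mono_2u.min monotone_const
  · funext j
    rcases fin2_cases j with h | h <;> subst h <;>
      (simp [cornerUL_ev0, cornerUL_ev1]; try norm_num)
  · funext j
    rcases fin2_cases j with h | h <;> subst h <;>
      (simp [cornerUL_ev0, cornerUL_ev1]; try norm_num)

lemma mono_3ua (ca : ℝ) (hca : 0 ≤ ca) : Monotone fun u : unitInterval => 3*u.1*ca := by
  intro x y h
  show 3*(x:ℝ)*ca ≤ 3*(y:ℝ)*ca
  have : (x:ℝ) ≤ y := h
  nlinarith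

lemma mono_3u1 : Monotone fun u : unitInterval => 3*u.1 - 1 := by
  intro x y h
  show 3*(x:ℝ) - 1 ≤ 3*(y:ℝ) - 1
  have : (x:ℝ) ≤ y := h
  linarith

lemma mono_3u2 : Monotone fun u : unitInterval => 3*u.1 - 2 := by
  intro x y h
  show 3*(x:ℝ) - 2 ≤ 3*(y:ℝ) - 2
  have : (x:ℝ) ≤ y := h
  linarith

lemma midPath_total (ca cb : ℝ) (hca0 : 0 ≤ ca) (hca1 : ca ≤ 1) (hcb0 : 0 ≤ cb) (hcb1 : cb ≤ 1)
    (Y : Set (Fin 2 → ℝ)) (hmem : ∀ u, midPath ca cb u ∈ Y) :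
    IsTotalDiPath 2 Y (midPath ca cb) := by
  refine ⟨⟨?_, hmem, ?_⟩, ?_, ?_⟩
  · refine continuous_pi fun j => ?_
    rcases fin2_cases j with h | h <;> subst h
    · simp only [midPath_ev0]
      exact (((continuous_const.mul continuous_subtype_val).mul continuous_const).min
        continuous_const).add
        ((((continuous_const.mul continuous_subtype_val).sub continuous_const).max
          continuous_const).mul continuous_const)
    · simp only [midPath_ev1]
      exact (((((continuous_const.mul continuous_subtype_val).sub continuous_const).max
        continuous_const).min continuous_const).mul continuous_const).add
        ((((continuous_const.mul continuous_subtype_val).sub continuous_const).max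
          continuous_const).mul continuous_const)
  · intro j
    rcases fin2_cases j with h | h <;> subst h
    · simp only [midPath_ev0]
      exact (((mono_3ua ca hca0).min monotone_const).add
        ((mono_3u2.max monotone_const).mul_const (by linarith)))
    · simp only [midPath_ev1]
      exact ((((mono_3u1.max monotone_const).min monotone_const).mul_const hcb0).add
        ((mono_3u2.max monotone_const).mul_const (by linarith)))
  · funext j
    have hc : ((0:unitInterval):ℝ) = 0 := rfl
    rcases fin2_cases j with h | h <;> subst h
    · show min (3*((0:unitInterval):ℝ)*ca) ca + (max (3*((0:unitInterval):ℝ)-2) 0)*(1-ca) = 0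
      rw [hc, show 3*(0:ℝ)*ca = 0 by ring, min_eq_left hca0,
        show 3*(0:ℝ)-2 = -2 by ring, max_eq_right (by norm_num)]
      ring
    · show (min (max (3*((0:unitInterval):ℝ)-1) 0) 1)*cb
        + (max (3*((0:unitInterval):ℝ)-2) 0)*(1-cb) = 0
      rw [hc, show 3*(0:ℝ)-1 = -1 by ring, show 3*(0:ℝ)-2 = -2 by ring,
        max_eq_right (by norm_num), max_eq_right (by norm_num), min_eq_left (by norm_num)]
      ring
  · funext j
    rcases fin2_cases j with h | h <;> subst h
    · show min (3*((1:unitInterval):ℝ)*ca) ca + (max (3*((1:unitInterval):ℝ)-2) 0)*(1-ca) = 1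
      have hc : ((1:unitInterval):ℝ) = 1 := rfl
      rw [hc]
      rw [min_eq_right (by linarith), max_eq_left (by norm_num)]
      ring
    · show (min (max (3*((1:unitInterval):ℝ)-1) 0) 1)*cb
        + (max (3*((1:unitInterval):ℝ)-2) 0)*(1-cb) = 1
      have hc : ((1:unitInterval):ℝ) = 1 := rfl
      rw [hc]
      rw [max_eq_left (by norm_num), min_eq_right (by norm_num), max_eq_left (by norm_num)]
      ring

end Reps

set_option maxHeartbeats 1000000 in
theorem stmt12 (x00 y00 x10 y10 x01 y01 x11 y11 : ℝ)
    (h1 : 0 < x00) (h2 : x00 < y00) (h3 : y00 < x10) (h4 : x10 < y10) (h5 : y10 < 1)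
    (h6 : 0 < x11) (h7 : x11 < y11) (h8 : y11 < x01) (h9 : x01 < y01) (h10 : y01 < 1)
    (X : Set (Fin 2 → ℝ))
    (hX : X = cube 2 \
      ({z | z 0 ∈ Ioo x00 y00 ∧ z 1 ∈ Ioo x01 y01} ∪
       {z | z 0 ∈ Ioo x10 y10 ∧ z 1 ∈ Ioo x11 y11})) :
    Nat.card (Quot fun p q : {p : unitInterval → Fin 2 → ℝ // IsTotalDiPath 2 X p} =>
      Dihomotopic 2 X p.1 q.1) = 3 := by
  classical
  -- basic facts about X
  have hcube : ∀ z ∈ X, ∀ j : Fin 2, 0 ≤ z j ∧ z j ≤ 1 := by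
    intro z hz j
    rw [hX] at hz
    exact ⟨(hz.1 j).1, (hz.1 j).2⟩
  have hav0 : ∀ z ∈ X, ¬(x00 < z 0 ∧ z 0 < y00 ∧ x01 < z 1 ∧ z 1 < y01) := by
    intro z hz hc
    rw [hX] at hz
    exact hz.2 (Or.inl ⟨⟨hc.1, hc.2.1⟩, hc.2.2.1, hc.2.2.2⟩)
  have hav1 : ∀ z ∈ X, ¬(x10 < z 0 ∧ z 0 < y10 ∧ x11 < z 1 ∧ z 1 < y11) := by
    intro z hz hc
    rw [hX] at hz
    exact hz.2 (Or.inr ⟨⟨hc.1, hc.2.1⟩, hc.2.2.1, hc.2.2.2⟩)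
  -- dichotomies and exclusivity
  have hdich1 : ∀ p, IsTotalDiPath 2 X p →
      (∃ t, p t 0 = (x10+y10)/2 ∧ p t 1 ≤ x11) ∨
      (∃ t, p t 0 = (x10+y10)/2 ∧ y11 ≤ p t 1) := by
    intro p hp
    obtain ⟨t, ht⟩ := totalIVT p hp.1.1 hp.2.1 hp.2.2 (m := (x10+y10)/2)
      (by linarith) (by linarith)
    have hv := hav1 _ (hp.1.2.1 t)
    by_cases hle : p t 1 ≤ x11
    · exact Or.inl ⟨t, ht, hle⟩
    · refine Or.inr ⟨t, ht, ?_⟩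
      by_contra hlt
      push_neg at hlt hle
      exact hv ⟨by rw [ht]; linarith, by rw [ht]; linarith, hle, hlt⟩
  have hdich0 : ∀ p, IsTotalDiPath 2 X p →
      (∃ t, p t 0 = (x00+y00)/2 ∧ p t 1 ≤ x01) ∨
      (∃ t, p t 0 = (x00+y00)/2 ∧ y01 ≤ p t 1) := by
    intro p hp
    obtain ⟨t, ht⟩ := totalIVT p hp.1.1 hp.2.1 hp.2.2 (m := (x00+y00)/2)
      (by linarith) (by linarith)
    have hv := hav0 _ (hp.1.2.1 t)
    by_cases hle : p t 1 ≤ x01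
    · exact Or.inl ⟨t, ht, hle⟩
    · refine Or.inr ⟨t, ht, ?_⟩
      by_contra hlt
      push_neg at hlt hle
      exact hv ⟨by rw [ht]; linarith, by rw [ht]; linarith, hle, hlt⟩
  have hexcl1 : ∀ p, IsTotalDiPath 2 X p →
      (∃ t, p t 0 = (x10+y10)/2 ∧ p t 1 ≤ x11) →
      (∃ t, p t 0 = (x10+y10)/2 ∧ y11 ≤ p t 1) → False := by
    rintro p hp ⟨t, ht⟩ ⟨s, hs⟩
    exact excl_lem p hp.1.1 hp.1.2.2 h4 h7 (fun u => hav1 _ (hp.1.2.1 u))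
      t s ht.1 ht.2 hs.1 hs.2
  have hexcl0 : ∀ p, IsTotalDiPath 2 X p →
      (∃ t, p t 0 = (x00+y00)/2 ∧ p t 1 ≤ x01) →
      (∃ t, p t 0 = (x00+y00)/2 ∧ y01 ≤ p t 1) → False := by
    rintro p hp ⟨t, ht⟩ ⟨s, hs⟩
    exact excl_lem p hp.1.1 hp.1.2.2 h2 h9 (fun u => hav0 _ (hp.1.2.1 u))
      t s ht.1 ht.2 hs.1 hs.2
  have hcombo : ∀ p, IsTotalDiPath 2 X p →
      (∃ t, p t 0 = (x00+y00)/2 ∧ y01 ≤ p t 1) →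
      (∃ t, p t 0 = (x10+y10)/2 ∧ p t 1 ≤ x11) → False := by
    rintro p hp ⟨t, ht0, ht1⟩ ⟨s, hs0, hs1⟩
    have hts : t ≤ s := by
      rcases le_total t s with h | h
      · exact h
      · have : p s 0 ≤ p t 0 := hp.1.2.2 0 h
        rw [ht0, hs0] at this
        linarith
    have : p t 1 ≤ p s 1 := hp.1.2.2 1 hts
    linarith
  -- the three regions
  set Ybb : Set (Fin 2 → ℝ) :=
    {z | (∀ j, 0 ≤ z j ∧ z j ≤ 1) ∧ (z 1 ≤ x11 ∨ y10 ≤ z 0)} with hYbbdef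
  set Yaa : Set (Fin 2 → ℝ) :=
    {z | (∀ j, 0 ≤ z j ∧ z j ≤ 1) ∧ (z 0 ≤ x00 ∨ y01 ≤ z 1)} with hYaadef
  set Yba : Set (Fin 2 → ℝ) :=
    {z | (∀ j, 0 ≤ z j ∧ z j ≤ 1) ∧ (z 1 ≤ x01 ∨ y00 ≤ z 0) ∧
      (z 0 ≤ x10 ∨ y11 ≤ z 1)} with hYbadef
  have hsub_bb : Ybb ⊆ X := by
    intro z hz
    rw [hX]
    refine ⟨fun j => ⟨(hz.1 j).1, (hz.1 j).2⟩, ?_⟩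
    rintro (⟨⟨a1, a2⟩, b1, b2⟩ | ⟨⟨a1, a2⟩, b1, b2⟩) <;>
      rcases hz.2 with h | h <;> linarith
  have hsub_aa : Yaa ⊆ X := by
    intro z hz
    rw [hX]
    refine ⟨fun j => ⟨(hz.1 j).1, (hz.1 j).2⟩, ?_⟩
    rintro (⟨⟨a1, a2⟩, b1, b2⟩ | ⟨⟨a1, a2⟩, b1, b2⟩) <;>
      rcases hz.2 with h | h <;> linarith
  have hsub_ba : Yba ⊆ X := by
    intro z hz
    rw [hX]
    refine ⟨fun j => ⟨(hz.1 j).1, (hz.1 j).2⟩, ?_⟩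
    rintro (⟨⟨a1, a2⟩, b1, b2⟩ | ⟨⟨a1, a2⟩, b1, b2⟩) <;>
      obtain ⟨hz1, hz2, hz3⟩ := hz <;> rcases hz2 with h | h <;>
        rcases hz3 with h' | h' <;> linarith
  have hbd_max : ∀ z w : Fin 2 → ℝ, (∀ j, 0 ≤ z j ∧ z j ≤ 1) → (∀ j, 0 ≤ w j ∧ w j ≤ 1) →
      ∀ j : Fin 2, 0 ≤ max (z j) (w j) ∧ max (z j) (w j) ≤ 1 :=
    fun z w hz hw j => ⟨le_trans (hz j).1 (le_max_left _ _), max_le (hz j).2 (hw j).2⟩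
  have hmax_bb : ∀ z ∈ Ybb, ∀ w ∈ Ybb, (fun j => max (z j) (w j)) ∈ Ybb := by
    intro z hz w hw
    refine ⟨hbd_max z w hz.1 hw.1, ?_⟩
    rcases hz.2 with h | h
    · rcases hw.2 with h' | h'
      · exact Or.inl (max_le h h')
      · exact Or.inr (le_trans h' (le_max_right _ _))
    · exact Or.inr (le_trans h (le_max_left _ _))
  have hmax_aa : ∀ z ∈ Yaa, ∀ w ∈ Yaa, (fun j => max (z j) (w j)) ∈ Yaa := by
    intro z hz w hw
    refine ⟨hbd_max z w hz.1 hw.1, ?_⟩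
    rcases hz.2 with h | h
    · rcases hw.2 with h' | h'
      · exact Or.inl (max_le h h')
      · exact Or.inr (le_trans h' (le_max_right _ _))
    · exact Or.inr (le_trans h (le_max_left _ _))
  have hmax_ba : ∀ z ∈ Yba, ∀ w ∈ Yba, (fun j => max (z j) (w j)) ∈ Yba := by
    intro z hz w hw
    refine ⟨hbd_max z w hz.1 hw.1, ?_, ?_⟩
    · rcases hz.2.1 with h | h
      · rcases hw.2.1 with h' | h'
        · exact Or.inl (max_le h h')
        · exact Or.inr (le_trans h' (le_max_right _ _))
      · exact Or.inr (le_trans h (le_max_left _ _))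
    · rcases hz.2.2 with h | h
      · rcases hw.2.2 with h' | h'
        · exact Or.inl (max_le h h')
        · exact Or.inr (le_trans h' (le_max_right _ _))
      · exact Or.inr (le_trans h (le_max_left _ _))
  -- class membership implies region membership
  have hreg_bb : ∀ p, IsTotalDiPath 2 X p →
      (∃ t, p t 0 = (x10+y10)/2 ∧ p t 1 ≤ x11) → IsTotalDiPath 2 Ybb p := by
    rintro p hp ⟨t, ht⟩
    refine ⟨⟨hp.1.1, fun u => ⟨fun j => hcube _ (hp.1.2.1 u) j, ?_⟩, hp.1.2.2⟩, hp.2⟩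
    rcases lt_or_ge (p u 0) y10 with h | h
    · exact Or.inl (below_lem p hp.1.1 hp.1.2.2 h4 h7
        (fun v => hav1 _ (hp.1.2.1 v)) t ht.1 ht.2 u h)
    · exact Or.inr h
  have hreg_aa : ∀ p, IsTotalDiPath 2 X p →
      (∃ t, p t 0 = (x00+y00)/2 ∧ y01 ≤ p t 1) → IsTotalDiPath 2 Yaa p := by
    rintro p hp ⟨t, ht⟩
    refine ⟨⟨hp.1.1, fun u => ⟨fun j => hcube _ (hp.1.2.1 u) j, ?_⟩, hp.1.2.2⟩, hp.2⟩
    rcases le_or_gt (p u 0) x00 with h | h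
    · exact Or.inl h
    · exact Or.inr (above_lem p hp.1.1 hp.1.2.2 h2 h9
        (fun v => hav0 _ (hp.1.2.1 v)) t ht.1 ht.2 u h)
  have hreg_ba : ∀ p, IsTotalDiPath 2 X p →
      (∃ t, p t 0 = (x00+y00)/2 ∧ p t 1 ≤ x01) →
      (∃ t, p t 0 = (x10+y10)/2 ∧ y11 ≤ p t 1) → IsTotalDiPath 2 Yba p := by
    rintro p hp ⟨t, ht⟩ ⟨s, hs⟩
    refine ⟨⟨hp.1.1, fun u => ⟨fun j => hcube _ (hp.1.2.1 u) j, ?_, ?_⟩, hp.1.2.2⟩, hp.2⟩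
    · rcases lt_or_ge (p u 0) y00 with h | h
      · exact Or.inl (below_lem p hp.1.1 hp.1.2.2 h2 h9
          (fun v => hav0 _ (hp.1.2.1 v)) t ht.1 ht.2 u h)
      · exact Or.inr h
    · rcases le_or_gt (p u 0) x10 with h | h
      · exact Or.inl h
      · exact Or.inr (above_lem p hp.1.1 hp.1.2.2 h4 h7
          (fun v => hav1 _ (hp.1.2.1 v)) s hs.1 hs.2 u h)
  -- same class implies dihomotopic
  have hbd_bb : ∀ z ∈ Ybb, ∀ j : Fin 2, 0 ≤ z j ∧ z j ≤ 1 := fun z hz => hz.1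
  have hbd_aa : ∀ z ∈ Yaa, ∀ j : Fin 2, 0 ≤ z j ∧ z j ≤ 1 := fun z hz => hz.1
  have hbd_ba : ∀ z ∈ Yba, ∀ j : Fin 2, 0 ≤ z j ∧ z j ≤ 1 := fun z hz => hz.1
  -- representatives
  have hmem_r0 : ∀ u, cornerLR u ∈ Ybb := by
    intro u
    have hu0 := u.2.1
    have hu1 := u.2.2
    refine ⟨?_, ?_⟩
    · intro j
      rcases fin2_cases j with h | h <;> subst h
      · rw [cornerLR_ev0]
        exact ⟨le_min (by linarith) (by norm_num), min_le_right _ _⟩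
      · rw [cornerLR_ev1]
        exact ⟨le_max_right _ _, max_le (by linarith) (by norm_num)⟩
    · rcases le_or_gt (2*u.1) 1 with h | h
      · left
        rw [cornerLR_ev1]
        exact max_le (by linarith) (by linarith)
      · right
        rw [cornerLR_ev0]
        exact le_min (by linarith) (by linarith)
  have hB1r0 : ∃ t, cornerLR t 0 = (x10+y10)/2 ∧ cornerLR t 1 ≤ x11 := by
    refine ⟨⟨(x10+y10)/4, by constructor <;> linarith⟩, ?_, ?_⟩
    · rw [cornerLR_ev0]
      show min (2*((x10+y10)/4)) 1 = (x10+y10)/2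
      rw [show 2*((x10+y10)/4) = (x10+y10)/2 by ring]
      exact min_eq_left (by linarith)
    · rw [cornerLR_ev1]
      show max (2*((x10+y10)/4) - 1) 0 ≤ x11
      exact max_le (by linarith) (by linarith)
  have hmem_r2 : ∀ u, cornerUL u ∈ Yaa := by
    intro u
    have hu0 := u.2.1
    have hu1 := u.2.2
    refine ⟨?_, ?_⟩
    · intro j
      rcases fin2_cases j with h | h <;> subst h
      · rw [cornerUL_ev0]
        exact ⟨le_max_right _ _, max_le (by linarith) (by norm_num)⟩
      · rw [cornerUL_ev1]
        exact ⟨le_min (by linarith) (by norm_num), min_le_right _ _⟩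
    · rcases le_or_gt (2*u.1) 1 with h | h
      · left
        rw [cornerUL_ev0]
        exact max_le (by linarith) (by linarith)
      · right
        rw [cornerUL_ev1]
        exact le_min (by linarith) (by linarith)
  have hA0r2 : ∃ t, cornerUL t 0 = (x00+y00)/2 ∧ y01 ≤ cornerUL t 1 := by
    refine ⟨⟨(2+x00+y00)/4, by constructor <;> linarith⟩, ?_, ?_⟩
    · rw [cornerUL_ev0]
      show max (2*((2+x00+y00)/4) - 1) 0 = (x00+y00)/2
      rw [show 2*((2+x00+y00)/4) - 1 = (x00+y00)/2 by ring]
      exact max_eq_left (by linarith)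
    · rw [cornerUL_ev1]
      show y01 ≤ min (2*((2+x00+y00)/4)) 1
      exact le_min (by linarith) (by linarith)
  -- the middle representative
  set ca : ℝ := (y00+x10)/2 with hcadef
  set cb : ℝ := (y11+x01)/2 with hcbdef
  have hca1 : y00 < ca := by rw [hcadef]; linarith
  have hca2 : ca < x10 := by rw [hcadef]; linarith
  have hca0 : 0 < ca := by linarith
  have hca3 : ca < 1 := by linarith
  have hcb1 : y11 < cb := by rw [hcbdef]; linarith
  have hcb2 : cb < x01 := by rw [hcbdef]; linarith
  have hcb0 : 0 < cb := by linarith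
  have hcb3 : cb < 1 := by linarith
  have hmem_r1 : ∀ u, midPath ca cb u ∈ Yba := by
    intro u
    have hu0 := u.2.1
    have hu1 := u.2.2
    have p1 : 0 ≤ min (3*u.1*ca) ca :=
      le_min (mul_nonneg (by linarith) hca0.le) hca0.le
    have p2 : min (3*u.1*ca) ca ≤ ca := min_le_right _ _
    have p3 : 0 ≤ max (3*u.1-2) 0 := le_max_right _ _
    have p4 : max (3*u.1-2) 0 ≤ 1 := max_le (by linarith) (by norm_num)
    have p5 : 0 ≤ (max (3*u.1-2) 0)*(1-ca) := mul_nonneg p3 (by linarith)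
    have p6 : (max (3*u.1-2) 0)*(1-ca) ≤ 1-ca :=
      mul_le_of_le_one_left (by linarith) p4
    have q1 : 0 ≤ min (max (3*u.1-1) 0) 1 := le_min (le_max_right _ _) (by norm_num)
    have q2 : min (max (3*u.1-1) 0) 1 ≤ 1 := min_le_right _ _
    have q3 : 0 ≤ (min (max (3*u.1-1) 0) 1)*cb := mul_nonneg q1 (by linarith)
    have q4 : (min (max (3*u.1-1) 0) 1)*cb ≤ cb :=
      mul_le_of_le_one_left hcb0.le q2
    have q5 : 0 ≤ (max (3*u.1-2) 0)*(1-cb) := mul_nonneg p3 (by linarith)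
    have q6 : (max (3*u.1-2) 0)*(1-cb) ≤ 1-cb :=
      mul_le_of_le_one_left (by linarith) p4
    refine ⟨?_, ?_, ?_⟩
    · intro j
      rcases fin2_cases j with h | h <;> subst h
      · rw [midPath_ev0]
        constructor <;> linarith
      · rw [midPath_ev1]
        constructor <;> linarith
    · rcases le_or_gt (3*u.1) 1 with h | h
      · left
        rw [midPath_ev1, max_eq_right (by linarith : 3*u.1-1 ≤ 0),
          min_eq_left (by norm_num : (0:ℝ) ≤ 1), max_eq_right (by linarith : 3*u.1-2 ≤ 0),
          zero_mul, zero_mul, add_zero]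
        linarith
      · right
        rw [midPath_ev0, min_eq_right (le_mul_of_one_le_left hca0.le (by linarith))]
        linarith
    · rcases le_or_gt (3*u.1) 2 with h | h
      · left
        rw [midPath_ev0, max_eq_right (by linarith : 3*u.1-2 ≤ 0), zero_mul, add_zero]
        linarith
      · right
        rw [midPath_ev1, max_eq_left (by linarith : (0:ℝ) ≤ 3*u.1-1),
          min_eq_right (by linarith : (1:ℝ) ≤ 3*u.1-1), one_mul]
        linarith
  have hB0r1 : ∃ t, midPath ca cb t 0 = (x00+y00)/2 ∧ midPath ca cb t 1 ≤ x01 := by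
    set τ : ℝ := (x00+y00)/2/(3*ca) with hτdef
    have hτ0 : 0 ≤ τ := by
      rw [hτdef]
      apply div_nonneg <;> linarith
    have hτca : 3*τ*ca = (x00+y00)/2 := by
      rw [hτdef, show (3:ℝ)*((x00+y00)/2/(3*ca))*ca = ((x00+y00)/2/(3*ca))*(3*ca) by ring]
      exact div_mul_cancel₀ _ (by positivity)
    have hτ1 : 3*τ ≤ 1 := by
      rw [hτdef]
      rw [show 3*((x00+y00)/2/(3*ca)) = (x00+y00)/2/ca by field_simp]
      rw [div_le_one hca0]
      linarith
    refine ⟨⟨τ, hτ0, by linarith⟩, ?_, ?_⟩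
    · rw [midPath_ev0]
      show min (3*τ*ca) ca + (max (3*τ-2) 0)*(1-ca) = (x00+y00)/2
      rw [hτca, min_eq_left (by linarith), max_eq_right (by linarith : 3*τ-2 ≤ 0)]
      ring
    · rw [midPath_ev1]
      show (min (max (3*τ-1) 0) 1)*cb + (max (3*τ-2) 0)*(1-cb) ≤ x01
      rw [max_eq_right (by linarith : 3*τ-1 ≤ 0), min_eq_left (by norm_num : (0:ℝ) ≤ 1),
        max_eq_right (by linarith : 3*τ-2 ≤ 0), zero_mul, zero_mul, add_zero]
      linarith
  have hA1r1 : ∃ t, midPath ca cb t 0 = (x10+y10)/2 ∧ y11 ≤ midPath ca cb t 1 := by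
    set sv : ℝ := ((x10+y10)/2 - ca)/(1-ca) with hsvdef
    have hsv0 : 0 ≤ sv := by
      rw [hsvdef]
      apply div_nonneg <;> linarith
    have hsv1 : sv ≤ 1 := by
      rw [hsvdef, div_le_one (by linarith)]
      linarith
    have hsvmul : sv*(1-ca) = (x10+y10)/2 - ca := by
      rw [hsvdef]
      exact div_mul_cancel₀ _ (by linarith : (1:ℝ)-ca ≠ 0)
    refine ⟨⟨(2+sv)/3, by constructor <;> linarith⟩, ?_, ?_⟩
    · rw [midPath_ev0]
      show min (3*((2+sv)/3)*ca) ca + (max (3*((2+sv)/3)-2) 0)*(1-ca) = (x10+y10)/2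
      rw [show 3*((2+sv)/3)*ca = (2+sv)*ca by ring, show 3*((2+sv)/3)-2 = sv by ring,
        min_eq_right (le_mul_of_one_le_left hca0.le (by linarith)), max_eq_left hsv0, hsvmul]
      ring
    · rw [midPath_ev1]
      show y11 ≤ (min (max (3*((2+sv)/3)-1) 0) 1)*cb + (max (3*((2+sv)/3)-2) 0)*(1-cb)
      rw [show 3*((2+sv)/3)-1 = 1+sv by ring, show 3*((2+sv)/3)-2 = sv by ring,
        max_eq_left (by linarith : (0:ℝ) ≤ 1+sv), min_eq_right (by linarith : (1:ℝ) ≤ 1+sv),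
        max_eq_left hsv0, one_mul]
      have := mul_nonneg hsv0 (by linarith : (0:ℝ) ≤ 1-cb)
      linarith
  -- total dipaths in X
  have hr0X : IsTotalDiPath 2 X cornerLR := cornerLR_total X fun u => hsub_bb (hmem_r0 u)
  have hr2X : IsTotalDiPath 2 X cornerUL := cornerUL_total X fun u => hsub_aa (hmem_r2 u)
  have hr1X : IsTotalDiPath 2 X (midPath ca cb) :=
    midPath_total ca cb (by linarith) (by linarith) (by linarith) (by linarith) X
      fun u => hsub_ba (hmem_r1 u)
  -- the classifying function
  set f : {p : unitInterval → Fin 2 → ℝ // IsTotalDiPath 2 X p} → Fin 3 := fun p =>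
    if ∃ t, p.1 t 0 = (x10+y10)/2 ∧ p.1 t 1 ≤ x11 then 0
    else if ∃ t, p.1 t 0 = (x00+y00)/2 ∧ y01 ≤ p.1 t 1 then 1 else 2 with hfdef
  have hinv : ∀ p q : {p : unitInterval → Fin 2 → ℝ // IsTotalDiPath 2 X p},
      Dihomotopic 2 X p.1 q.1 → f p = f q := by
    intro p q h
    have hB1 := (dihom_inv_aux h4 h7 hav1 (by linarith) (by linarith) h).2 p.2.2.1 p.2.2.2
    have hB0 := (dihom_inv_aux h2 h9 hav0 (by linarith) (by linarith) h).2 p.2.2.1 p.2.2.2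
    have hA0 : (∃ t, p.1 t 0 = (x00+y00)/2 ∧ y01 ≤ p.1 t 1) ↔
        (∃ t, q.1 t 0 = (x00+y00)/2 ∧ y01 ≤ q.1 t 1) := by
      constructor
      · intro ha
        rcases hdich0 q.1 q.2 with hb | ha'
        · exact (hexcl0 p.1 p.2 (hB0.mpr hb) ha).elim
        · exact ha'
      · intro ha
        rcases hdich0 p.1 p.2 with hb | ha'
        · exact (hexcl0 q.1 q.2 (hB0.mp hb) ha).elim
        · exact ha'
    rw [hfdef]
    by_cases hb : ∃ t, p.1 t 0 = (x10+y10)/2 ∧ p.1 t 1 ≤ x11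
    · simp only [if_pos hb, if_pos (hB1.mp hb)]
    · have hbq : ¬ ∃ t, q.1 t 0 = (x10+y10)/2 ∧ q.1 t 1 ≤ x11 := fun h' => hb (hB1.mpr h')
      by_cases ha : ∃ t, p.1 t 0 = (x00+y00)/2 ∧ y01 ≤ p.1 t 1
      · simp only [if_neg hb, if_neg hbq, if_pos ha, if_pos (hA0.mp ha)]
      · have haq : ¬ ∃ t, q.1 t 0 = (x00+y00)/2 ∧ y01 ≤ q.1 t 1 := fun h' => ha (hA0.mpr h')
        simp only [if_neg hb, if_neg hbq, if_neg ha, if_neg haq]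
  -- same class implies dihomotopic
  have hsame_bb : ∀ p q : {p : unitInterval → Fin 2 → ℝ // IsTotalDiPath 2 X p},
      (∃ t, p.1 t 0 = (x10+y10)/2 ∧ p.1 t 1 ≤ x11) →
      (∃ t, q.1 t 0 = (x10+y10)/2 ∧ q.1 t 1 ≤ x11) → Dihomotopic 2 X p.1 q.1 :=
    fun p q hp hq => lattice_dihom hsub_bb hmax_bb hbd_bb
      (hreg_bb p.1 p.2 hp) (hreg_bb q.1 q.2 hq)
  have hsame_aa : ∀ p q : {p : unitInterval → Fin 2 → ℝ // IsTotalDiPath 2 X p},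
      (∃ t, p.1 t 0 = (x00+y00)/2 ∧ y01 ≤ p.1 t 1) →
      (∃ t, q.1 t 0 = (x00+y00)/2 ∧ y01 ≤ q.1 t 1) → Dihomotopic 2 X p.1 q.1 :=
    fun p q hp hq => lattice_dihom hsub_aa hmax_aa hbd_aa
      (hreg_aa p.1 p.2 hp) (hreg_aa q.1 q.2 hq)
  have hsame_ba : ∀ p q : {p : unitInterval → Fin 2 → ℝ // IsTotalDiPath 2 X p},
      (∃ t, p.1 t 0 = (x00+y00)/2 ∧ p.1 t 1 ≤ x01) →
      (∃ t, p.1 t 0 = (x10+y10)/2 ∧ y11 ≤ p.1 t 1) →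
      (∃ t, q.1 t 0 = (x00+y00)/2 ∧ q.1 t 1 ≤ x01) →
      (∃ t, q.1 t 0 = (x10+y10)/2 ∧ y11 ≤ q.1 t 1) → Dihomotopic 2 X p.1 q.1 :=
    fun p q hp hp' hq hq' => lattice_dihom hsub_ba hmax_ba hbd_ba
      (hreg_ba p.1 p.2 hp hp') (hreg_ba q.1 q.2 hq hq')
  -- assemble the equivalence
  have hnB1r2 : ¬ ∃ t, cornerUL t 0 = (x10+y10)/2 ∧ cornerUL t 1 ≤ x11 :=
    fun hb => hcombo _ hr2X hA0r2 hb
  have hnB1r1 : ¬ ∃ t, midPath ca cb t 0 = (x10+y10)/2 ∧ midPath ca cb t 1 ≤ x11 :=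
    fun hb => hexcl1 _ hr1X hb hA1r1
  have hnA0r1 : ¬ ∃ t, midPath ca cb t 0 = (x00+y00)/2 ∧ y01 ≤ midPath ca cb t 1 :=
    fun ha => hexcl0 _ hr1X hB0r1 ha
  have hfr0 : f ⟨cornerLR, hr0X⟩ = 0 := by rw [hfdef]; exact if_pos hB1r0
  have hfr2 : f ⟨cornerUL, hr2X⟩ = 1 := by
    rw [hfdef]
    simp only [if_neg hnB1r2, if_pos hA0r2]
  have hfr1 : f ⟨midPath ca cb, hr1X⟩ = 2 := by
    rw [hfdef]
    simp only [if_neg hnB1r1, if_neg hnA0r1]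
  refine Nat.card_eq_of_equiv_fin (α := Quot fun p q :
      {p : unitInterval → Fin 2 → ℝ // IsTotalDiPath 2 X p} => Dihomotopic 2 X p.1 q.1) ?_
  refine ⟨Quot.lift f hinv, fun i =>
    if i = 0 then Quot.mk _ ⟨cornerLR, hr0X⟩
    else if i = 1 then Quot.mk _ ⟨cornerUL, hr2X⟩
    else Quot.mk _ ⟨midPath ca cb, hr1X⟩, ?_, ?_⟩
  · apply Quot.ind
    intro p
    show (if Quot.lift f hinv (Quot.mk _ p) = 0 then Quot.mk _ ⟨cornerLR, hr0X⟩
      else if Quot.lift f hinv (Quot.mk _ p) = 1 then Quot.mk _ ⟨cornerUL, hr2X⟩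
      else Quot.mk _ ⟨midPath ca cb, hr1X⟩) = Quot.mk _ p
    show (if f p = 0 then Quot.mk _ ⟨cornerLR, hr0X⟩
      else if f p = 1 then Quot.mk _ ⟨cornerUL, hr2X⟩
      else Quot.mk _ ⟨midPath ca cb, hr1X⟩) = Quot.mk _ p
    by_cases hb : ∃ t, p.1 t 0 = (x10+y10)/2 ∧ p.1 t 1 ≤ x11
    · have hfp : f p = 0 := by rw [hfdef]; exact if_pos hb
      rw [hfp, if_pos rfl]
      exact Quot.sound (hsame_bb ⟨cornerLR, hr0X⟩ p hB1r0 hb)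
    · by_cases ha : ∃ t, p.1 t 0 = (x00+y00)/2 ∧ y01 ≤ p.1 t 1
      · have hfp : f p = 1 := by rw [hfdef]; simp only [if_neg hb, if_pos ha]
        rw [hfp]
        norm_num
        exact Quot.sound (hsame_aa ⟨cornerUL, hr2X⟩ p hA0r2 ha)
      · have hfp : f p = 2 := by rw [hfdef]; simp only [if_neg hb, if_neg ha]
        rw [hfp]
        norm_num
        have hB0p : ∃ t, p.1 t 0 = (x00+y00)/2 ∧ p.1 t 1 ≤ x01 :=
          (hdich0 p.1 p.2).resolve_right ha
        have hA1p : ∃ t, p.1 t 0 = (x10+y10)/2 ∧ y11 ≤ p.1 t 1 :=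
          (hdich1 p.1 p.2).resolve_left hb
        exact Quot.sound (hsame_ba ⟨midPath ca cb, hr1X⟩ p hB0r1 hA1r1 hB0p hA1p)
  · intro i
    fin_cases i
    · norm_num
      exact hfr0
    · norm_num
      exact hfr2
    · norm_num
      exact hfr1
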